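/- arXiv:1806.05270 — 4 statements merged into one kernel-verified Lean document; each statement's English description precedes it below -/
import Mathlib

section
/- Let H be a formal free power series such that the domain D_H = {F ∈ ℱ²_d : H·F ∈ ℱ²_d} is dense in ℱ²_d. Then there exist bounded left multipliers A and B of ℱ²_d such that: (i) A is left outer; (ii) B = H·A as formal power series; (iii) the column (A,B) is an isometric multiplier, i.e. ‖A·F‖² + ‖B·F‖² = ‖F‖² for every F ∈ ℱ²_d; and moreover D_H = {A·F : F ∈ ℱ²_d} and the graph {(F, H·F) : F ∈ D_H} equals {(A·F, B·F) : F ∈ ℱ²_d}. -/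
noncomputable section
open scoped ENNReal

namespace Smirnov

/-- Words in the letters `1,…,d`: the free monoid `𝔽⁺_d`. -/
abbrev Word (d : ℕ) := List (Fin d)

/-- The full Fock space `ℱ²_d = ℓ²(𝔽⁺_d)`. -/
abbrev Fock (d : ℕ) : Type := lp (fun _ : Word d => ℂ) 2

/-- The Cauchy product of formal free power series:
`(H·F)_α = ∑_{βγ=α} H_β F_γ`. -/
def cauchy {d : ℕ} (H F : Word d → ℂ) : Word d → ℂ :=
  fun α => ∑ i ∈ Finset.range (α.length + 1), H (List.take i α) * F (List.drop i α)

/-- The standard basis formal power series `ξ_w`; `eWord []` is `ξ_∅`. -/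
def eWord {d : ℕ} (w : Word d) : Word d → ℂ := fun α => if α = w then 1 else 0

/-- `H` is a bounded left multiplier of the Fock space: `H·F ∈ ℱ²_d` for every
`F ∈ ℱ²_d` and `F ↦ H·F` is bounded. -/
def IsBLM {d : ℕ} (H : Word d → ℂ) : Prop :=
  (∀ F : Fock d, Memℓp (cauchy H (F : Word d → ℂ)) 2) ∧
  (∃ C : ℝ, ∀ F G : Fock d, (G : Word d → ℂ) = cauchy H (F : Word d → ℂ) → ‖G‖ ≤ C * ‖F‖)

/-- `A` is left outer: `A·ℱ²_d` is dense in `ℱ²_d`. -/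
def IsLeftOuter {d : ℕ} (A : Word d → ℂ) : Prop :=
  Dense {G : Fock d | ∃ F : Fock d, (G : Word d → ℂ) = cauchy A (F : Word d → ℂ)}

/-- The domain `D_H = {F ∈ ℱ²_d : H·F ∈ ℱ²_d}` of left multiplication by `H`. -/
def domH {d : ℕ} (H : Word d → ℂ) : Set (Fock d) :=
  {F : Fock d | Memℓp (cauchy H (F : Word d → ℂ)) 2}

variable {d : ℕ}

local notation "⟪" x ", " y "⟫" => @inner ℂ _ _ x y

open Classical in
/-- Right shift of coordinates by the word `w`. -/
def rs (w : Word d) (f : Word d → ℂ) : Word d → ℂ :=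
  fun α => if w <:+ α then f (α.take (α.length - w.length)) else 0

lemma rs_append (w : Word d) (f : Word d → ℂ) (β : Word d) : rs w f (β ++ w) = f β := by
  rw [rs, if_pos (List.suffix_append β w)]
  have h : (β ++ w).length - w.length = β.length := by simp
  rw [h, List.take_left]

lemma rs_not {w α : Word d} (f : Word d → ℂ) (h : ¬ w <:+ α) : rs w f α = 0 := by
  rw [rs, if_neg h]

lemma rs_small {w α : Word d} (f : Word d → ℂ) (h : α.length < w.length) : rs w f α = 0 :=
  rs_not f fun hs => absurd hs.length_le (not_le.2 h)

lemma rs_nil (f : Word d → ℂ) : rs ([] : Word d) f = f := by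
  funext α
  rw [rs, if_pos List.nil_suffix]
  simp

lemma rs_comp (w v : Word d) (f : Word d → ℂ) : rs w (rs v f) = rs (v ++ w) f := by
  funext α
  by_cases h : w <:+ α
  · obtain ⟨γ, rfl⟩ := h
    rw [rs_append]
    by_cases hv : v <:+ γ
    · obtain ⟨δ, rfl⟩ := hv
      rw [rs_append, List.append_assoc, rs_append]
    · rw [rs_not _ hv, rs_not]
      rintro ⟨t, ht⟩
      rw [← List.append_assoc] at ht
      exact hv ⟨t, List.append_cancel_right ht⟩
  · rw [rs_not _ h, rs_not]
    rintro ⟨t, rfl⟩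
    exact h ((List.suffix_append v w).trans ⟨t, rfl⟩)

lemma rs_add (w : Word d) (f g : Word d → ℂ) : rs w (f + g) = rs w f + rs w g := by
  funext α
  by_cases h : w <:+ α
  · simp only [rs, if_pos h, Pi.add_apply]
  · simp only [rs, if_neg h, Pi.add_apply, add_zero]

lemma rs_smul (w : Word d) (c : ℂ) (f : Word d → ℂ) : rs w (c • f) = c • rs w f := by
  funext α
  by_cases h : w <:+ α
  · simp only [rs, if_pos h, Pi.smul_apply]
  · simp only [rs, if_neg h, Pi.smul_apply, smul_zero]

lemma append_inj (w : Word d) : Function.Injective (fun β : Word d => β ++ w) :=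
  fun _ _ h => List.append_cancel_right h

lemma rs_support {w : Word d} (f : Word d → ℂ) {r : ℝ} (hr : r ≠ 0) :
    (Function.support fun α => ‖rs w f α‖ ^ r) ⊆ Set.range (fun β : Word d => β ++ w) := by
  intro α hα
  by_cases h : w <:+ α
  · obtain ⟨β, rfl⟩ := h
    exact ⟨β, rfl⟩
  · exfalso
    apply hα
    show ‖rs w f α‖ ^ r = 0
    rw [rs_not _ h, norm_zero, Real.zero_rpow hr]

lemma two_toReal : ((2 : ℝ≥0∞).toReal) = (2:ℝ) := by simp

lemma memℓp_rs {w : Word d} {f : Word d → ℂ} (hf : Memℓp f 2) : Memℓp (rs w f) 2 := by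
  have h2 : (0:ℝ) < (2 : ℝ≥0∞).toReal := by rw [two_toReal]; norm_num
  apply memℓp_gen
  refine ((append_inj w).summable_iff ?_).1 ?_
  · exact fun α hα => Function.notMem_support.1 fun hs => hα (rs_support f h2.ne' hs)
  · have : (fun α => ‖rs w f α‖ ^ (2:ℝ≥0∞).toReal) ∘ (fun β : Word d => β ++ w)
        = fun β => ‖f β‖ ^ (2:ℝ≥0∞).toReal := by
      funext β; simp [Function.comp, rs_append]
    rw [this]
    exact hf.summable h2

lemma tsum_rs {w : Word d} (f : Word d → ℂ) :
    ∑' α, ‖rs w f α‖ ^ (2:ℝ≥0∞).toReal = ∑' β, ‖f β‖ ^ (2:ℝ≥0∞).toReal := by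
  have h2 : ((2:ℝ≥0∞).toReal) ≠ 0 := by rw [two_toReal]; norm_num
  rw [← (append_inj w).tsum_eq (rs_support f h2)]
  congr 1
  funext β
  rw [rs_append]

-- part 2 (appended to p1 before `end Smirnov`)
lemma norm_eq_of_sq {a b : ℝ} (ha : 0 ≤ a) (hb : 0 ≤ b) (h : a^2 = b^2) : a = b := by
  nlinarith [sq_nonneg (a - b), sq_nonneg (a + b)]

/-- Right shift as a linear isometry of Fock space. -/
def RF (w : Word d) : Fock d →ₗᵢ[ℂ] Fock d where
  toLinearMap :=
    { toFun := fun F => ⟨rs w ⇑F, memℓp_rs (lp.memℓp F)⟩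
      map_add' := fun F G => by
        apply lp.ext
        simp only [lp.coeFn_add]
        exact rs_add w ⇑F ⇑G
      map_smul' := fun c F => by
        apply lp.ext
        simp only [lp.coeFn_smul, RingHom.id_apply]
        exact rs_smul w c ⇑F }
  norm_map' := by
    intro F
    have h2 : (0:ℝ) < (2 : ℝ≥0∞).toReal := by rw [two_toReal]; norm_num
    rw [lp.norm_eq_tsum_rpow h2, lp.norm_eq_tsum_rpow h2]
    congr 1
    exact tsum_rs ⇑F

@[simp] lemma RF_apply (w : Word d) (F : Fock d) (α : Word d) :
    (⇑(RF w F) : Word d → ℂ) α = rs w ⇑F α := rfl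

/-- The two-fold Fock space with the `L²` product norm. -/
abbrev KK (d : ℕ) := WithLp 2 (Fock d × Fock d)

def mkK (a b : Fock d) : KK d := (WithLp.equiv 2 (Fock d × Fock d)).symm (a, b)

@[simp] lemma mkK_fst (a b : Fock d) : (mkK a b).fst = a := rfl
@[simp] lemma mkK_snd (a b : Fock d) : (mkK a b).snd = b := rfl

lemma KK_ext {x y : KK d} (h1 : x.fst = y.fst) (h2 : x.snd = y.snd) : x = y :=
  WithLp.ofLp_injective 2 (Prod.ext h1 h2)

lemma KK_ext_coords {x y : KK d} (h1 : ∀ α, (⇑x.fst : Word d → ℂ) α = ⇑y.fst α)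
    (h2 : ∀ α, (⇑x.snd : Word d → ℂ) α = ⇑y.snd α) : x = y :=
  KK_ext (lp.ext (funext h1)) (lp.ext (funext h2))

/-- Right shift on the two-fold Fock space. -/
def RK (w : Word d) : KK d →ₗᵢ[ℂ] KK d where
  toLinearMap :=
    { toFun := fun x => mkK (RF w x.fst) (RF w x.snd)
      map_add' := fun x y => by
        apply KK_ext <;> simp
      map_smul' := fun c x => by
        apply KK_ext <;> simp }
  norm_map' := by
    intro x
    apply norm_eq_of_sq (norm_nonneg _) (norm_nonneg _)
    rw [WithLp.prod_norm_sq_eq_of_L2, WithLp.prod_norm_sq_eq_of_L2]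
    simp [(RF w).norm_map]

@[simp] lemma RK_fst (w : Word d) (x : KK d) : (RK w x).fst = RF w x.fst := rfl
@[simp] lemma RK_snd (w : Word d) (x : KK d) : (RK w x).snd = RF w x.snd := rfl

lemma RK_nil (x : KK d) : RK ([] : Word d) x = x := by
  apply KK_ext_coords <;> intro α <;> simp [rs_nil]

lemma RK_comp (w v : Word d) (x : KK d) : RK w (RK v x) = RK (v ++ w) x := by
  apply KK_ext_coords <;> intro α
  · show rs w ⇑(RF v x.fst) α = rs (v ++ w) ⇑x.fst α
    rw [show ⇑(RF v x.fst) = rs v ⇑x.fst from rfl, rs_comp]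
  · show rs w ⇑(RF v x.snd) α = rs (v ++ w) ⇑x.snd α
    rw [show ⇑(RF v x.snd) = rs v ⇑x.snd from rfl, rs_comp]
lemma cauchy_add (H f g : Word d → ℂ) : cauchy H (f + g) = cauchy H f + cauchy H g := by
  funext α
  simp [cauchy, mul_add, Finset.sum_add_distrib]

lemma cauchy_smul (H : Word d → ℂ) (c : ℂ) (f : Word d → ℂ) :
    cauchy H (c • f) = c • cauchy H f := by
  funext α
  simp only [cauchy, Pi.smul_apply, smul_eq_mul, Finset.mul_sum]
  exact Finset.sum_congr rfl fun i _ => by ring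

lemma cauchy_rs (H : Word d → ℂ) (w : Word d) (f : Word d → ℂ) :
    cauchy H (rs w f) = rs w (cauchy H f) := by
  funext α
  by_cases h : w <:+ α
  · obtain ⟨β, rfl⟩ := h
    rw [rs_append]
    show ∑ i ∈ Finset.range ((β ++ w).length + 1), H ((β ++ w).take i) * rs w f ((β ++ w).drop i)
      = cauchy H f β
    rw [List.length_append]
    rw [← Finset.sum_subset (Finset.range_subset_range.2 (by omega :
        β.length + 1 ≤ β.length + w.length + 1))]
    · refine Finset.sum_congr rfl fun i hi => ?_
      have hi' : i ≤ β.length := by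
        simpa using Nat.lt_succ_iff.1 (Finset.mem_range.1 hi)
      rw [List.take_append_of_le_length hi', List.drop_append_of_le_length hi', rs_append]
    · intro i hi hni
      have h2 : i < β.length + w.length + 1 := Finset.mem_range.1 hi
      have h1 : β.length + 1 ≤ i := by
        by_contra hc
        exact hni (Finset.mem_range.2 (by omega))
      obtain ⟨k, rfl⟩ : ∃ k, i = β.length + k := ⟨i - β.length, by omega⟩
      rw [List.drop_append, List.drop_eq_nil_of_le (by omega), List.nil_append,
        Nat.add_sub_cancel_left]
      have hlen : (w.drop k).length < w.length := by
        rw [List.length_drop]; omega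
      rw [rs_small _ hlen, mul_zero]
  · rw [rs_not _ h]
    apply Finset.sum_eq_zero
    intro i _
    rw [rs_not, mul_zero]
    exact fun hs => h (hs.trans (List.drop_suffix i α))

/-- The graph subspace of left multiplication by `H` inside the two-fold Fock space. -/
def GG (H : Word d → ℂ) : Submodule ℂ (KK d) where
  carrier := {x | ∀ α, (⇑x.snd : Word d → ℂ) α = cauchy H ⇑x.fst α}
  add_mem' := by
    intro x y hx hy α
    have h1 : (⇑(x + y).snd : Word d → ℂ) = ⇑x.snd + ⇑y.snd := lp.coeFn_add x.snd y.snd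
    have h2 : (⇑(x + y).fst : Word d → ℂ) = ⇑x.fst + ⇑y.fst := lp.coeFn_add x.fst y.fst
    rw [h1, h2, cauchy_add, Pi.add_apply, Pi.add_apply, hx α, hy α]
  zero_mem' := by
    intro α
    have h1 : (⇑(0 : KK d).snd : Word d → ℂ) = 0 := lp.coeFn_zero _ _
    have h2 : (⇑(0 : KK d).fst : Word d → ℂ) = 0 := lp.coeFn_zero _ _
    rw [h1, h2]
    simp [cauchy]
  smul_mem' := by
    intro c x hx α
    have h1 : (⇑(c • x).snd : Word d → ℂ) = c • ⇑x.snd := lp.coeFn_smul c x.snd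
    have h2 : (⇑(c • x).fst : Word d → ℂ) = c • ⇑x.fst := lp.coeFn_smul c x.fst
    rw [h1, h2, cauchy_smul, Pi.smul_apply, Pi.smul_apply, hx α]

lemma mem_GG {H : Word d → ℂ} {x : KK d} :
    x ∈ GG H ↔ ∀ α, (⇑x.snd : Word d → ℂ) α = cauchy H ⇑x.fst α := Iff.rfl

/-- Coordinate evaluation as a continuous linear functional on Fock space. -/
def coordCLM (α : Word d) : Fock d →L[ℂ] ℂ :=
  LinearMap.mkContinuous
    { toFun := fun f => (⇑f : Word d → ℂ) α
      map_add' := fun f g => congrFun (lp.coeFn_add f g) α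
      map_smul' := fun c f => congrFun (lp.coeFn_smul c f) α }
    1 (fun f => by
      simpa using lp.norm_apply_le_norm (by norm_num : (2:ℝ≥0∞) ≠ 0) f α)

@[simp] lemma coordCLM_apply (α : Word d) (f : Fock d) : coordCLM α f = ⇑f α := rfl

def fstCLM : KK d →L[ℂ] Fock d :=
  (ContinuousLinearMap.fst ℂ (Fock d) (Fock d)).comp
    (WithLp.prodContinuousLinearEquiv 2 ℂ (Fock d) (Fock d) : KK d →L[ℂ] Fock d × Fock d)

def sndCLM : KK d →L[ℂ] Fock d :=
  (ContinuousLinearMap.snd ℂ (Fock d) (Fock d)).comp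
    (WithLp.prodContinuousLinearEquiv 2 ℂ (Fock d) (Fock d) : KK d →L[ℂ] Fock d × Fock d)

@[simp] lemma fstCLM_apply (x : KK d) : fstCLM x = x.fst := rfl
@[simp] lemma sndCLM_apply (x : KK d) : sndCLM x = x.snd := rfl

lemma isClosed_GG (H : Word d → ℂ) : IsClosed (GG H : Set (KK d)) := by
  have : (GG H : Set (KK d)) = ⋂ α : Word d,
      {x : KK d | coordCLM α (sndCLM x) =
        ∑ i ∈ Finset.range (α.length + 1),
          H (α.take i) * coordCLM (α.drop i) (fstCLM x)} := by
    ext x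
    simp only [Set.mem_iInter, Set.mem_setOf_eq, coordCLM_apply, fstCLM_apply, sndCLM_apply]
    exact ⟨fun h α => h α, fun h α => h α⟩
  rw [this]
  refine isClosed_iInter fun α => isClosed_eq ?_ ?_
  · exact ((coordCLM α).comp sndCLM).continuous
  · exact continuous_finset_sum _ fun i _ =>
      (continuous_const.mul (((coordCLM (α.drop i)).comp fstCLM).continuous))

lemma GG_rk_mem {H : Word d → ℂ} {x : KK d} (w : Word d) (hx : x ∈ GG H) :
    RK w x ∈ GG H := by
  intro α
  show rs w ⇑x.snd α = cauchy H (rs w ⇑x.fst) α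
  rw [cauchy_rs, funext hx]
lemma inner_K_zero {x y : KK d}
    (h : ∀ α : Word d, ((⇑x.fst : Word d → ℂ) α = 0 ∧ (⇑x.snd : Word d → ℂ) α = 0) ∨
      ((⇑y.fst : Word d → ℂ) α = 0 ∧ (⇑y.snd : Word d → ℂ) α = 0)) :
    ⟪x, y⟫ = 0 := by
  rw [WithLp.prod_inner_apply, lp.inner_eq_tsum, lp.inner_eq_tsum]
  have h1 : ∀ α : Word d, ⟪(⇑x.fst : Word d → ℂ) α, (⇑y.fst : Word d → ℂ) α⟫ = 0 := by
    intro α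
    rcases h α with ⟨h0, -⟩ | ⟨h0, -⟩
    · rw [h0, inner_zero_left]
    · rw [h0, inner_zero_right]
  have h2 : ∀ α : Word d, ⟪(⇑x.snd : Word d → ℂ) α, (⇑y.snd : Word d → ℂ) α⟫ = 0 := by
    intro α
    rcases h α with ⟨-, h0⟩ | ⟨-, h0⟩
    · rw [h0, inner_zero_left]
    · rw [h0, inner_zero_right]
  exact (congrArg₂ (· + ·) ((tsum_congr h1).trans tsum_zero)
    ((tsum_congr h2).trans tsum_zero)).trans (add_zero 0)

lemma rs_suffix {w α : Word d} {f : Word d → ℂ} (h : rs w f α ≠ 0) : w <:+ α := by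
  by_contra hc
  exact h (rs_not f hc)

lemma inner_RK_zero {w v : Word d} (h1 : ¬ w <:+ v) (h2 : ¬ v <:+ w) (x y : KK d) :
    ⟪RK w x, RK v y⟫ = 0 := by
  apply inner_K_zero
  intro α
  by_cases hw : w <:+ α
  · right
    constructor <;> {
      show rs v _ α = 0
      apply rs_not
      intro hv
      rcases List.suffix_or_suffix_of_suffix hw hv with h | h
      · exact h1 h
      · exact h2 h }
  · left
    constructor <;> exact rs_not _ hw

/-- The image of the graph under the `i`-th shift. -/
def MM (H : Word d → ℂ) (i : Fin d) : Submodule ℂ (KK d) :=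
  (GG H).map (RK (d := d) [i]).toLinearMap

lemma mem_MM {H : Word d → ℂ} {i : Fin d} {m : KK d} :
    m ∈ MM H i ↔ ∃ x ∈ GG H, RK [i] x = m := Iff.rfl

lemma MM_le_GG {H : Word d → ℂ} (i : Fin d) : MM H i ≤ GG H := by
  rintro m ⟨x, hx, rfl⟩
  exact GG_rk_mem _ hx

lemma MM_isComplete (H : Word d → ℂ) (i : Fin d) : IsComplete (MM H i : Set (KK d)) := by
  have h1 : (MM H i : Set (KK d)) = (RK (d := d) [i]) '' (GG H : Set (KK d)) :=
    Submodule.map_coe _ _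
  rw [h1]
  rw [isComplete_image_iff (RK (d := d) [i]).isometry.isUniformInducing]
  exact (isClosed_GG H).isComplete

lemma MM_orth {H : Word d → ℂ} {i j : Fin d} (hij : i ≠ j) {m m' : KK d}
    (hm : m ∈ MM H i) (hm' : m' ∈ MM H j) : ⟪m, m'⟫ = 0 := by
  obtain ⟨x, -, rfl⟩ := hm
  obtain ⟨y, -, rfl⟩ := hm'
  apply inner_RK_zero
  · intro hs
    exact hij (by simpa using hs.eq_of_length rfl)
  · intro hs
    exact hij (by simpa using (hs.eq_of_length rfl).symm)

/-- The wandering subspace of the graph. -/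
def WW (H : Word d → ℂ) : Submodule ℂ (KK d) :=
  GG H ⊓ ⨅ i : Fin d, (MM H i)ᗮ

lemma mem_WW {H : Word d → ℂ} {x : KK d} :
    x ∈ WW H ↔ x ∈ GG H ∧ ∀ i : Fin d, ∀ m ∈ MM H i, ⟪m, x⟫ = 0 := by
  simp only [WW, Submodule.mem_inf, Submodule.mem_iInf, Submodule.mem_orthogonal]
lemma vanish (H : Word d → ℂ) :
    ∀ n : ℕ, ∀ y : KK d, y ∈ GG H →
      (∀ (w : Word d) (x : KK d), x ∈ WW H → ⟪RK w x, y⟫ = 0) →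
      ∀ α : Word d, α.length < n →
        (⇑y.fst : Word d → ℂ) α = 0 ∧ (⇑y.snd : Word d → ℂ) α = 0 := by
  intro n
  induction n with
  | zero => exact fun y _ _ α hα => absurd hα (Nat.not_lt_zero _)
  | succ n ih =>
    intro y hy horth α hα
    haveI : ∀ i : Fin d, CompleteSpace (MM H i) := fun i =>
      (MM_isComplete H i).completeSpace_coe
    set z : Fin d → KK d := fun i => (Submodule.orthogonalProjectionOnto (MM H i) y : KK d) with hz
    have hzMM : ∀ i, z i ∈ MM H i := fun i => SetLike.coe_mem _
    have hzG : ∀ i, z i ∈ GG H := fun i => MM_le_GG i (hzMM i)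
    have hex : ∀ i, ∃ g ∈ GG H, RK [i] g = z i := fun i => hzMM i
    choose g hgG hgz using hex
    set r : KK d := y - ∑ i : Fin d, z i with hr
    have hrG : r ∈ GG H := Submodule.sub_mem _ hy (Submodule.sum_mem _ fun i _ => hzG i)
    have hrO : ∀ i : Fin d, ∀ m ∈ MM H i, ⟪m, r⟫ = 0 := by
      intro i m hm
      rw [hr, inner_sub_right, inner_sum]
      have hsum : ∑ j : Fin d, ⟪m, z j⟫ = ⟪m, z i⟫ := by
        apply Finset.sum_eq_single
        · exact fun j _ hji => MM_orth hji.symm hm (hzMM j)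
        · intro h; exact absurd (Finset.mem_univ i) h
      rw [hsum]
      have h0 : ⟪m, y - z i⟫ = 0 :=
        inner_eq_zero_symm.1 (Submodule.starProjection_inner_eq_zero y m hm)
      rw [inner_sub_right] at h0
      linear_combination h0
    have hrW : r ∈ WW H := mem_WW.2 ⟨hrG, hrO⟩
    have hr0 : r = 0 := by
      have h1 : ⟪r, y⟫ = 0 := by
        have := horth [] r hrW
        rwa [RK_nil] at this
      have h2 : ∀ i, ⟪r, z i⟫ = 0 := fun i =>
        inner_eq_zero_symm.1 (hrO i _ (hzMM i))
      have h3 : ⟪r, r⟫ = 0 := by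
        nth_rewrite 2 [hr]
        rw [inner_sub_right, inner_sum, h1]
        simp [h2]
      exact inner_self_eq_zero.1 h3
    have hy_eq : y = ∑ i : Fin d, z i := by
      rw [hr] at hr0
      exact sub_eq_zero.1 hr0
    have hgood : ∀ i : Fin d, ∀ (w : Word d) (x : KK d), x ∈ WW H → ⟪RK w x, g i⟫ = 0 := by
      intro i w x hx
      have e1 : ⟪RK w x, g i⟫ = ⟪RK (w ++ [i]) x, z i⟫ := by
        rw [← (RK [i]).inner_map_map (RK w x) (g i), RK_comp, hgz i]
      rw [e1]
      have hsupp : ∀ j, j ≠ i → ⟪RK (w ++ [i]) x, z j⟫ = 0 := by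
        intro j hji
        obtain ⟨x', -, hx'⟩ := hzMM j
        rw [← hx']
        apply inner_RK_zero
        · intro hs
          have h' : ([i] : Word d) <:+ [j] := (List.suffix_append w [i]).trans hs
          exact hji (by simpa using (h'.eq_of_length rfl).symm)
        · rintro ⟨t, ht⟩
          have := List.append_inj' ht rfl
          exact hji (by simpa using this.2)
      have hone : ⟪RK (w ++ [i]) x, z i⟫ = ∑ j : Fin d, ⟪RK (w ++ [i]) x, z j⟫ := by
        symm
        apply Finset.sum_eq_single
        · exact fun j _ hji => hsupp j hji
        · intro h; exact absurd (Finset.mem_univ i) h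
      rw [hone, ← inner_sum, ← hy_eq]
      exact horth (w ++ [i]) x hx
    have hy_eq' : y = ∑ i : Fin d, RK [i] (g i) := by
      rw [hy_eq]
      exact Finset.sum_congr rfl fun i _ => (hgz i).symm
    have hcomp : ∀ φ : KK d →L[ℂ] ℂ, φ y = ∑ i : Fin d, φ (RK [i] (g i)) := by
      intro φ
      rw [hy_eq']
      exact map_sum φ _ _
    have hfst : ∀ β : Word d, (⇑y.fst : Word d → ℂ) β = ∑ i : Fin d, rs [i] (⇑(g i).fst) β :=
      fun β => hcomp ((coordCLM β).comp fstCLM)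
    have hsnd : ∀ β : Word d, (⇑y.snd : Word d → ℂ) β = ∑ i : Fin d, rs [i] (⇑(g i).snd) β :=
      fun β => hcomp ((coordCLM β).comp sndCLM)
    rcases List.eq_nil_or_concat' α with rfl | ⟨γ, i0, rfl⟩
    · constructor
      · rw [hfst]
        exact Finset.sum_eq_zero fun i _ => rs_small _ (by simp)
      · rw [hsnd]
        exact Finset.sum_eq_zero fun i _ => rs_small _ (by simp)
    · have hγ : γ.length < n := by
        rw [List.length_append] at hα
        simpa using hα
      constructor
      · rw [hfst]
        apply Finset.sum_eq_zero
        intro i _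
        by_cases hi : i = i0
        · subst hi
          rw [show (γ ++ [i] : Word d) = γ ++ [i] from rfl, rs_append [i] _ γ]
          exact (ih (g i) (hgG i) (hgood i) γ hγ).1
        · apply rs_not
          rintro ⟨t, ht⟩
          have := List.append_inj' ht rfl
          exact hi (by simpa using this.2)
      · rw [hsnd]
        apply Finset.sum_eq_zero
        intro i _
        by_cases hi : i = i0
        · subst hi
          rw [rs_append [i] _ γ]
          exact (ih (g i) (hgG i) (hgood i) γ hγ).2
        · apply rs_not
          rintro ⟨t, ht⟩
          have := List.append_inj' ht rfl
          exact hi (by simpa using this.2)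

lemma eq_zero_of_orth {H : Word d → ℂ} {y : KK d} (hy : y ∈ GG H)
    (horth : ∀ (w : Word d) (x : KK d), x ∈ WW H → ⟪RK w x, y⟫ = 0) : y = 0 := by
  apply KK_ext_coords
  · intro α
    have h := (vanish H (α.length + 1) y hy horth α (Nat.lt_succ_self _)).1
    rw [h]
    have h0 : (⇑(0 : KK d).fst : Word d → ℂ) = 0 := lp.coeFn_zero _ _
    rw [h0]; rfl
  · intro α
    have h := (vanish H (α.length + 1) y hy horth α (Nat.lt_succ_self _)).2
    rw [h]
    have h0 : (⇑(0 : KK d).snd : Word d → ℂ) = 0 := lp.coeFn_zero _ _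
    rw [h0]; rfl
def desc (i : Fin d) (f : Word d → ℂ) : Word d → ℂ := fun β => f (β ++ [i])

lemma memℓp_desc {i : Fin d} {f : Word d → ℂ} (hf : Memℓp f 2) : Memℓp (desc i f) 2 := by
  have h2 : (0:ℝ) < (2 : ℝ≥0∞).toReal := by rw [two_toReal]; norm_num
  apply memℓp_gen
  exact (hf.summable h2).comp_injective (append_inj [i])

def descF (i : Fin d) (F : Fock d) : Fock d := ⟨desc i ⇑F, memℓp_desc (lp.memℓp F)⟩

def descK (i : Fin d) (x : KK d) : KK d := mkK (descF i x.fst) (descF i x.snd)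

lemma cauchy_desc {H f : Word d → ℂ} (h0 : f [] = 0) (i : Fin d) (β : Word d) :
    cauchy H f (β ++ [i]) = cauchy H (desc i f) β := by
  show ∑ k ∈ Finset.range ((β ++ [i]).length + 1), H ((β ++ [i]).take k) * f ((β ++ [i]).drop k)
    = ∑ k ∈ Finset.range (β.length + 1), H (β.take k) * (desc i f) (β.drop k)
  have hlen : (β ++ [i]).length = β.length + 1 := by simp
  rw [hlen, Finset.sum_range_succ]
  have hlast : H ((β ++ [i]).take (β.length + 1)) * f ((β ++ [i]).drop (β.length + 1)) = 0 := by
    have hdrop : (β ++ [i]).drop (β.length + 1) = [] := by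
      apply List.drop_eq_nil_of_le
      simp
    rw [hdrop, h0, mul_zero]
  rw [hlast, add_zero]
  refine Finset.sum_congr rfl fun k hk => ?_
  have hk' : k ≤ β.length := Nat.lt_succ_iff.1 (Finset.mem_range.1 hk)
  rw [List.take_append_of_le_length hk', List.drop_append_of_le_length hk']
  rfl

lemma descK_mem {H : Word d → ℂ} {x : KK d} (hx : x ∈ GG H)
    (h0 : (⇑x.fst : Word d → ℂ) [] = 0) (i : Fin d) : descK i x ∈ GG H := by
  intro β
  show desc i ⇑x.snd β = cauchy H (desc i ⇑x.fst) β
  rw [← cauchy_desc h0 i β]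
  exact hx (β ++ [i])

lemma sum_descK {H : Word d → ℂ} {x : KK d} (hx : x ∈ GG H)
    (h0 : (⇑x.fst : Word d → ℂ) [] = 0) :
    ∑ i : Fin d, RK [i] (descK i x) = x := by
  have h0' : (⇑x.snd : Word d → ℂ) [] = 0 := by
    rw [hx []]
    simp [cauchy, h0]
  have hcoe : ∀ (φ : KK d →L[ℂ] ℂ),
      φ (∑ i : Fin d, RK [i] (descK i x)) = ∑ i : Fin d, φ (RK [i] (descK i x)) :=
    fun φ => map_sum φ _ _
  apply KK_ext_coords
  · intro α
    have hstep : (⇑(∑ i : Fin d, RK [i] (descK i x)).fst : Word d → ℂ) α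
        = ∑ i : Fin d, rs [i] (⇑(descF i x.fst)) α := hcoe ((coordCLM α).comp fstCLM)
    rw [hstep]
    rcases List.eq_nil_or_concat' α with rfl | ⟨γ, i0, rfl⟩
    · rw [Finset.sum_eq_zero fun i _ => rs_small _ (by simp)]
      exact h0.symm
    · rw [Finset.sum_eq_single i0]
      · rw [rs_append]
        rfl
      · intro i _ hi
        apply rs_not
        rintro ⟨t, ht⟩
        have := List.append_inj' ht rfl
        exact hi (by simpa using this.2)
      · intro h; exact absurd (Finset.mem_univ i0) h
  · intro α
    have hstep : (⇑(∑ i : Fin d, RK [i] (descK i x)).snd : Word d → ℂ) α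
        = ∑ i : Fin d, rs [i] (⇑(descF i x.snd)) α := hcoe ((coordCLM α).comp sndCLM)
    rw [hstep]
    rcases List.eq_nil_or_concat' α with rfl | ⟨γ, i0, rfl⟩
    · rw [Finset.sum_eq_zero fun i _ => rs_small _ (by simp)]
      exact h0'.symm
    · rw [Finset.sum_eq_single i0]
      · rw [rs_append]
        rfl
      · intro i _ hi
        apply rs_not
        rintro ⟨t, ht⟩
        have := List.append_inj' ht rfl
        exact hi (by simpa using this.2)
      · intro h; exact absurd (Finset.mem_univ i0) h

lemma W_elt_zero {H : Word d → ℂ} {x : KK d} (hx : x ∈ WW H)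
    (h0 : (⇑x.fst : Word d → ℂ) [] = 0) : x = 0 := by
  obtain ⟨hxG, hxO⟩ := mem_WW.1 hx
  have hsum := sum_descK hxG h0
  have hinner : ⟪x, x⟫ = 0 := by
    nth_rewrite 1 [← hsum]
    rw [sum_inner]
    apply Finset.sum_eq_zero
    intro i _
    exact hxO i _ ⟨descK i x, descK_mem hxG h0 i, rfl⟩
  exact inner_self_eq_zero.1 hinner
lemma fst_norm_le (x : KK d) : ‖x.fst‖ ≤ ‖x‖ := by
  have h := WithLp.prod_norm_sq_eq_of_L2 x
  nlinarith [norm_nonneg x, norm_nonneg x.fst, norm_nonneg x.snd]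

lemma snd_norm_le (x : KK d) : ‖x.snd‖ ≤ ‖x‖ := by
  have h := WithLp.prod_norm_sq_eq_of_L2 x
  nlinarith [norm_nonneg x, norm_nonneg x.fst, norm_nonneg x.snd]


set_option maxHeartbeats 1000000 in
set_option synthInstance.maxHeartbeats 200000 in
/-- If `H` is a formal free power series whose domain
`D_H = {F ∈ ℱ²_d : H·F ∈ ℱ²_d}` is dense in `ℱ²_d`, then there are bounded left
multipliers `A, B` with `A` left outer, `B = H·A`, the column `(A,B)` isometric,
`D_H = A·ℱ²_d`, and the graph of `T_H` equal to `{(A·F, B·F) : F ∈ ℱ²_d}`. -/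
theorem statement0 {d : ℕ} (hd : 0 < d) (H : Word d → ℂ)
    (hdense : Dense (domH H)) :
    ∃ A B : Word d → ℂ,
      IsBLM A ∧ IsBLM B ∧
      -- (i) A is left outer
      IsLeftOuter A ∧
      -- (ii) B = H·A as formal power series
      B = cauchy H A ∧
      -- (iii) the column (A,B) is an isometric multiplier
      (∀ (F GA GB : Fock d),
        (GA : Word d → ℂ) = cauchy A (F : Word d → ℂ) →
        (GB : Word d → ℂ) = cauchy B (F : Word d → ℂ) →
        ‖GA‖ ^ 2 + ‖GB‖ ^ 2 = ‖F‖ ^ 2) ∧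
      -- D_H = {A·F : F ∈ ℱ²_d}
      domH H = {G : Fock d | ∃ F : Fock d, (G : Word d → ℂ) = cauchy A (F : Word d → ℂ)} ∧
      -- graph of T_H = {(A·F, B·F) : F ∈ ℱ²_d}
      {p : Fock d × Fock d | (p.2 : Word d → ℂ) = cauchy H (p.1 : Word d → ℂ)} =
        {p : Fock d × Fock d | ∃ F : Fock d,
          (p.1 : Word d → ℂ) = cauchy A (F : Word d → ℂ) ∧
          (p.2 : Word d → ℂ) = cauchy B (F : Word d → ℂ)} := by
  classical
  haveI : CompleteSpace (GG H) := (isClosed_GG H).completeSpace_coe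
  -- a nonzero element of the domain
  have hFex : ∃ F : Fock d, F ∈ domH H ∧ F ≠ 0 := by
    by_contra hc
    push_neg at hc
    have hsub : domH H ⊆ {0} := fun F hF => hc F hF
    have h1 : closure (domH H) ⊆ closure ({0} : Set (Fock d)) := closure_mono hsub
    rw [hdense.closure_eq, isClosed_singleton.closure_eq] at h1
    have h3 : (lp.single 2 ([] : Word d) (1:ℂ) : Fock d) = 0 := h1 (Set.mem_univ _)
    have h4 : ((lp.single 2 ([] : Word d) (1:ℂ) : Fock d) : Word d → ℂ) []
        = ((0 : Fock d) : Word d → ℂ) [] := by rw [h3]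
    rw [lp.single_apply_self, lp.coeFn_zero] at h4
    exact one_ne_zero h4
  obtain ⟨F0, hF0mem, hF0ne⟩ := hFex
  have hy₀G : mkK F0 ⟨cauchy H ⇑F0, hF0mem⟩ ∈ GG H := fun α => rfl
  have hy₀ne : mkK F0 ⟨cauchy H ⇑F0, hF0mem⟩ ≠ 0 := by
    intro h
    apply hF0ne
    have h2 := congrArg (fun x : KK d => x.fst) h
    exact h2
  -- the wandering subspace is nonzero
  have hWne : ∃ x ∈ WW H, x ≠ 0 := by
    by_contra hc
    push_neg at hc
    apply hy₀ne
    apply eq_zero_of_orth hy₀G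
    intro w x hx
    rw [hc x hx, map_zero, inner_zero_left]
  obtain ⟨x', hx'W, hx'ne⟩ := hWne
  set x₀ : KK d := ((‖x'‖ : ℂ)⁻¹) • x' with hx₀def
  have hx₀W : x₀ ∈ WW H := Submodule.smul_mem _ _ hx'W
  have hx₀G : x₀ ∈ GG H := (mem_WW.1 hx₀W).1
  have hnorm : ‖x₀‖ = 1 := by
    rw [hx₀def, norm_smul, norm_inv, Complex.norm_real, norm_norm]
    exact inv_mul_cancel₀ (norm_ne_zero_iff.2 hx'ne)
  have hA0ne : (⇑x₀.fst : Word d → ℂ) [] ≠ 0 := by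
    intro h0
    rw [W_elt_zero hx₀W h0] at hnorm
    simp at hnorm
  -- the wandering subspace is one-dimensional
  have hspan : ∀ x ∈ WW H, ∃ c : ℂ, x = c • x₀ := by
    intro x hx
    set c : ℂ := (⇑x.fst : Word d → ℂ) [] / (⇑x₀.fst : Word d → ℂ) [] with hc
    refine ⟨c, ?_⟩
    have hmem : x - c • x₀ ∈ WW H :=
      Submodule.sub_mem _ hx (Submodule.smul_mem _ _ hx₀W)
    have hco : (⇑(x - c • x₀).fst : Word d → ℂ) [] = 0 := by
      have h1 : (x - c • x₀).fst = x.fst - c • x₀.fst := rfl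
      rw [h1, lp.coeFn_sub, Pi.sub_apply, lp.coeFn_smul, Pi.smul_apply, smul_eq_mul, hc,
        div_mul_cancel₀ _ hA0ne, sub_self]
    have h2 := W_elt_zero hmem hco
    rw [sub_eq_zero] at h2
    exact h2
  -- the orthonormal family
  set v : Word d → GG H := fun w => ⟨RK w x₀, GG_rk_mem w hx₀G⟩ with hv
  have horth1 : ∀ w t : Word d, t ≠ [] → (⟪RK w x₀, RK (t ++ w) x₀⟫ : ℂ) = 0 := by
    intro w t ht
    rw [← RK_comp w t x₀, (RK w).inner_map_map]
    rcases List.eq_nil_or_concat' t with rfl | ⟨t', i, rfl⟩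
    · exact absurd rfl ht
    · rw [← RK_comp [i] t' x₀]
      exact inner_eq_zero_symm.1
        ((mem_WW.1 hx₀W).2 i _ ⟨RK t' x₀, GG_rk_mem t' hx₀G, rfl⟩)
  have honb : Orthonormal ℂ v := by
    rw [orthonormal_iff_ite]
    intro w u
    by_cases hwu : w = u
    · subst hwu
      rw [if_pos rfl]
      show (⟪RK w x₀, RK w x₀⟫ : ℂ) = 1
      rw [(RK w).inner_map_map, inner_self_eq_norm_sq_to_K, hnorm]
      norm_num
    · rw [if_neg hwu]
      show (⟪RK w x₀, RK u x₀⟫ : ℂ) = 0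
      by_cases h1 : w <:+ u
      · obtain ⟨t, rfl⟩ := h1
        have ht : t ≠ [] := by rintro rfl; exact hwu (by simp)
        exact horth1 w t ht
      · by_cases h2 : u <:+ w
        · obtain ⟨t, rfl⟩ := h2
          have ht : t ≠ [] := by rintro rfl; exact hwu (by simp)
          rw [inner_eq_zero_symm]
          exact horth1 u t ht
        · exact inner_RK_zero h1 h2 x₀ x₀
  have hbot : (Submodule.span ℂ (Set.range v))ᗮ = ⊥ := by
    rw [Submodule.eq_bot_iff]
    intro y hyorth
    have hy0 : ∀ w : Word d, (⟪RK w x₀, (y : KK d)⟫ : ℂ) = 0 := by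
      intro w
      exact (Submodule.mem_orthogonal _ _).1 hyorth (v w)
        (Submodule.subset_span (Set.mem_range_self w))
    have hzero : (y : KK d) = 0 := by
      apply eq_zero_of_orth y.2
      intro w x hx
      obtain ⟨c, rfl⟩ := hspan x hx
      rw [map_smul, inner_smul_left, hy0 w, mul_zero]
    exact Submodule.coe_eq_zero.1 hzero
  set b : HilbertBasis (Word d) ℂ (GG H) := HilbertBasis.mkOfOrthogonalEqBot honb hbot with hb
  set A : Word d → ℂ := ⇑x₀.fst with hA
  set B : Word d → ℂ := ⇑x₀.snd with hB
  set U : Fock d → GG H := fun F => b.repr.symm F with hU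
  have hUval : ∀ F : Fock d, ⇑(b.repr (U F)) = ⇑F := fun F => by
    rw [hU, b.repr.apply_symm_apply F]
  have hUnorm : ∀ F : Fock d, ‖(U F : KK d)‖ = ‖F‖ := by
    intro F
    have : ‖(U F : KK d)‖ = ‖U F‖ := rfl
    rw [this, hU, LinearIsometryEquiv.norm_map]
  have hbv : ∀ w : Word d, (b w : KK d) = RK w x₀ := by
    intro w
    rw [hb, HilbertBasis.coe_mkOfOrthogonalEqBot]
  -- the coordinate computation
  have hcoordgen : ∀ (F : Fock d) (φ : KK d →L[ℂ] ℂ) (ψ : Word d → ℂ) (α : Word d),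
      (∀ w : Word d, φ (RK w x₀) = rs w ψ α) → φ (U F : KK d) = cauchy ψ ⇑F α := by
    intro F φ ψ α hφ
    have h1 : HasSum (fun w => b.repr (U F) w • b w) (U F) := b.hasSum_repr (U F)
    have h2 : HasSum (fun w : Word d => (⇑F : Word d → ℂ) w • (φ.comp (GG H).subtypeL) (b w))
        ((φ.comp (GG H).subtypeL) (U F)) := by
      have h2' := h1.mapL (φ.comp (GG H).subtypeL)
      have heq : (fun w : Word d => (φ.comp (GG H).subtypeL) (b.repr (U F) w • b w))
          = fun w : Word d => (⇑F : Word d → ℂ) w • (φ.comp (GG H).subtypeL) (b w) := by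
        funext w
        rw [map_smul]
        congr 1
        exact congrFun (hUval F) w
      rwa [heq] at h2'
    have h3 : HasSum (fun w : Word d => (⇑F : Word d → ℂ) w • rs w ψ α)
        (φ (U F : KK d)) := by
      have heq : (fun w : Word d => (⇑F : Word d → ℂ) w • (φ.comp (GG H).subtypeL) (b w))
          = fun w : Word d => (⇑F : Word d → ℂ) w • rs w ψ α := by
        funext w
        congr 1
        rw [ContinuousLinearMap.comp_apply, Submodule.subtypeL_apply]
        rw [show ((b w : GG H) : KK d) = RK w x₀ from hbv w]
        exact hφ w
      rw [← heq]
      exact h2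
    have h4 : HasSum (fun w : Word d => (⇑F : Word d → ℂ) w • rs w ψ α)
        (cauchy ψ ⇑F α) := by
      have hvan : ∀ w ∉ (Finset.range (α.length + 1)).image (fun k => α.drop k),
          (⇑F : Word d → ℂ) w • rs w ψ α = 0 := by
        intro w hw
        rcases em (w <:+ α) with h | h
        · exfalso
          apply hw
          obtain ⟨β, rfl⟩ := h
          refine Finset.mem_image.2 ⟨β.length, Finset.mem_range.2 ?_, List.drop_left⟩
          rw [List.length_append]
          omega
        · rw [rs_not _ h, smul_zero]
      have h5 := hasSum_sum_of_ne_finset_zero (L := SummationFilter.unconditional _) hvan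
      have hinj : ∀ k ∈ Finset.range (α.length + 1), ∀ k' ∈ Finset.range (α.length + 1),
          α.drop k = α.drop k' → k = k' := by
        intro k hk k' hk' he
        have h6 := congrArg List.length he
        rw [List.length_drop, List.length_drop] at h6
        have hk1 : k < α.length + 1 := Finset.mem_range.1 hk
        have hk2 : k' < α.length + 1 := Finset.mem_range.1 hk'
        omega
      have hsum : ∑ w ∈ (Finset.range (α.length + 1)).image (fun k => α.drop k),
          (⇑F : Word d → ℂ) w • rs w ψ α = cauchy ψ ⇑F α := by
        rw [Finset.sum_image hinj]
        show _ = ∑ k ∈ Finset.range (α.length + 1), ψ (α.take k) * (⇑F) (α.drop k)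
        refine Finset.sum_congr rfl fun k _ => ?_
        have h7 : rs (α.drop k) ψ α = ψ (α.take k) := by
          have h8 := rs_append (α.drop k) ψ (α.take k)
          rw [List.take_append_drop] at h8
          exact h8
        rw [h7, smul_eq_mul, mul_comm]
      rw [← hsum]
      exact h5
    exact h3.unique h4
  have hAco : ∀ (F : Fock d) (α : Word d),
      (⇑(U F : KK d).fst : Word d → ℂ) α = cauchy A ⇑F α := by
    intro F α
    exact hcoordgen F ((coordCLM α).comp fstCLM) A α (fun w => by rw [hA]; rfl)
  have hBco : ∀ (F : Fock d) (α : Word d),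
      (⇑(U F : KK d).snd : Word d → ℂ) α = cauchy B ⇑F α := by
    intro F α
    exact hcoordgen F ((coordCLM α).comp sndCLM) B α (fun w => by rw [hB]; rfl)
  have hUG : ∀ F : Fock d, ∀ α : Word d,
      (⇑(U F : KK d).snd : Word d → ℂ) α = cauchy H ⇑(U F : KK d).fst α :=
    fun F => (U F).2
  -- the domain identity
  have hdom : domH H = {G : Fock d | ∃ F : Fock d,
      (G : Word d → ℂ) = cauchy A (F : Word d → ℂ)} := by
    ext G
    constructor
    · intro hG
      have hxG : mkK G ⟨cauchy H ⇑G, hG⟩ ∈ GG H := fun α => rfl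
      set F' : Fock d := b.repr ⟨mkK G ⟨cauchy H ⇑G, hG⟩, hxG⟩ with hF'
      refine ⟨F', ?_⟩
      have hUF' : U F' = ⟨mkK G ⟨cauchy H ⇑G, hG⟩, hxG⟩ := by
        rw [hU, hF']
        exact b.repr.symm_apply_apply _
      funext α
      rw [← hAco F' α, hUF']
      rfl
    · rintro ⟨F, hF⟩
      show Memℓp (cauchy H ⇑G) 2
      have h1 : (⇑G : Word d → ℂ) = ⇑(U F : KK d).fst :=
        hF.trans (funext (hAco F)).symm
      have h2 : cauchy H ⇑G = ⇑(U F : KK d).snd := by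
        rw [h1]
        exact (funext (hUG F)).symm
      rw [h2]
      exact lp.memℓp _
  refine ⟨A, B, ?_, ?_, ?_, ?_, ?_, hdom, ?_⟩
  · -- IsBLM A
    constructor
    · intro F
      have h1 : cauchy A ⇑F = ⇑(U F : KK d).fst := (funext (hAco F)).symm
      rw [h1]
      exact lp.memℓp _
    · refine ⟨1, fun F G hG => ?_⟩
      have hGeq : G = (U F : KK d).fst :=
        lp.ext (hG.trans (funext (hAco F)).symm)
      rw [hGeq, one_mul, ← hUnorm F]
      exact fst_norm_le _
  · -- IsBLM B
    constructor
    · intro F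
      have h1 : cauchy B ⇑F = ⇑(U F : KK d).snd := (funext (hBco F)).symm
      rw [h1]
      exact lp.memℓp _
    · refine ⟨1, fun F G hG => ?_⟩
      have hGeq : G = (U F : KK d).snd :=
        lp.ext (hG.trans (funext (hBco F)).symm)
      rw [hGeq, one_mul, ← hUnorm F]
      exact snd_norm_le _
  · -- IsLeftOuter A
    show Dense {G : Fock d | ∃ F : Fock d, (G : Word d → ℂ) = cauchy A (F : Word d → ℂ)}
    rw [← hdom]
    exact hdense
  · -- B = cauchy H A
    funext α
    exact hx₀G α
  · -- isometric column
    intro F GA GB hGA hGB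
    have e1 : GA = (U F : KK d).fst := lp.ext (hGA.trans (funext (hAco F)).symm)
    have e2 : GB = (U F : KK d).snd := lp.ext (hGB.trans (funext (hBco F)).symm)
    rw [e1, e2, ← WithLp.prod_norm_sq_eq_of_L2, hUnorm F]
  · -- graph identity
    ext p
    simp only [Set.mem_setOf_eq]
    constructor
    · intro hp
      have hmem : Memℓp (cauchy H ⇑p.1) 2 := by
        rw [← hp]
        exact lp.memℓp p.2
      have hxG : mkK p.1 p.2 ∈ GG H := fun α => congrFun hp α
      set F' : Fock d := b.repr ⟨mkK p.1 p.2, hxG⟩ with hF'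
      have hUF' : U F' = ⟨mkK p.1 p.2, hxG⟩ := by
        rw [hU, hF']
        exact b.repr.symm_apply_apply _
      refine ⟨F', ?_, ?_⟩
      · funext α
        rw [← hAco F' α, hUF']
        rfl
      · funext α
        rw [← hBco F' α, hUF']
        rfl
    · rintro ⟨F, h1, h2⟩
      have e1 : (⇑p.1 : Word d → ℂ) = ⇑(U F : KK d).fst :=
        h1.trans (funext (hAco F)).symm
      have e2 : (⇑p.2 : Word d → ℂ) = ⇑(U F : KK d).snd :=
        h2.trans (funext (hBco F)).symm
      rw [e1, e2]
      exact funext (hUG F)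

end Smirnov
end
end

section
/- Suppose A and B are bounded left multipliers of ℱ²_d with A left outer, and H is a formal free power series with H·A = B (Cauchy product of formal series). Then A·ℱ²_d ⊆ D_H = {F ∈ ℱ²_d : H·F ∈ ℱ²_d}, with H·(A·F) = B·F for every F ∈ ℱ²_d; in particular D_H is dense in ℱ²_d. -/
noncomputable section
open scoped ENNReal

namespace Smirnov

/-- Triangular sum reindexing. -/
lemma tri_sum {M : Type*} [AddCommMonoid M] (n : ℕ) (g : ℕ → ℕ → M) :
    ∑ i ∈ Finset.range (n+1), ∑ j ∈ Finset.range (n-i+1), g i j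
    = ∑ k ∈ Finset.range (n+1), ∑ i ∈ Finset.range (k+1), g i (k-i) := by
  rw [Finset.sum_sigma', Finset.sum_sigma']
  refine Finset.sum_nbij' (fun x => ⟨x.1 + x.2, x.1⟩) (fun x => ⟨x.2, x.1 - x.2⟩)
    ?_ ?_ ?_ ?_ ?_
  · rintro ⟨i, j⟩ h
    simp only [Finset.mem_sigma, Finset.mem_range] at h ⊢
    omega
  · rintro ⟨k, i⟩ h
    simp only [Finset.mem_sigma, Finset.mem_range] at h ⊢
    omega
  · rintro ⟨i, j⟩ h
    simp only [Finset.mem_sigma, Finset.mem_range] at h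
    ext <;> simp <;> omega
  · rintro ⟨k, i⟩ h
    simp only [Finset.mem_sigma, Finset.mem_range] at h
    ext <;> simp <;> omega
  · rintro ⟨i, j⟩ h
    simp only [Finset.mem_sigma, Finset.mem_range] at h
    simp only [Nat.add_sub_cancel_left]

/-- Associativity of the Cauchy product. -/
lemma cauchy_assoc {d : ℕ} (H A F : Word d → ℂ) :
    cauchy H (cauchy A F) = cauchy (cauchy H A) F := by
  funext α
  unfold cauchy
  have L : ∀ i ∈ Finset.range (α.length + 1),
      H (List.take i α) * ∑ j ∈ Finset.range ((List.drop i α).length + 1),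
        A (List.take j (List.drop i α)) * F (List.drop j (List.drop i α))
      = ∑ j ∈ Finset.range (α.length - i + 1),
        H (List.take i α) * (A (List.drop i (List.take (i+j) α)) * F (List.drop (i+j) α)) := by
    intro i _
    rw [Finset.mul_sum, List.length_drop]
    refine Finset.sum_congr rfl fun j _ => ?_
    rw [List.take_drop, List.drop_drop]
  rw [Finset.sum_congr rfl L, tri_sum]
  refine Finset.sum_congr rfl fun k hk => ?_
  simp only [Finset.mem_range] at hk
  have hlen : (List.take k α).length = k := by
    rw [List.length_take]; omega
  rw [hlen, Finset.sum_mul]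
  refine Finset.sum_congr rfl fun i hi => ?_
  simp only [Finset.mem_range] at hi
  have h1 : i + (k - i) = k := by omega
  have h2 : List.take i (List.take k α) = List.take i α := by
    rw [List.take_take]; congr 1; omega
  rw [h1, h2, mul_assoc]

set_option linter.unusedVariables false

/-- If `A, B` are bounded left multipliers with `A` left outer
and `H·A = B` as formal power series, then `A·ℱ²_d ⊆ D_H`, with
`H·(A·F) = B·F` for every `F ∈ ℱ²_d`; in particular `D_H` is dense. -/
theorem statement2 {d : ℕ} (hd : 0 < d) (A B H : Word d → ℂ)
    (hA : IsBLM A) (hB : IsBLM B) (houtA : IsLeftOuter A)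
    (hHA : cauchy H A = B) :
    (∀ F G : Fock d, (G : Word d → ℂ) = cauchy A (F : Word d → ℂ) →
      G ∈ domH H ∧ cauchy H (G : Word d → ℂ) = cauchy B (F : Word d → ℂ)) ∧
    Dense (domH H) := by
  have main : ∀ F G : Fock d, (G : Word d → ℂ) = cauchy A (F : Word d → ℂ) →
      G ∈ domH H ∧ cauchy H (G : Word d → ℂ) = cauchy B (F : Word d → ℂ) := by
    intro F G hG
    have key : cauchy H (G : Word d → ℂ) = cauchy B (F : Word d → ℂ) := by
      rw [hG, cauchy_assoc, hHA]
    refine ⟨?_, key⟩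
    show Memℓp (cauchy H (G : Word d → ℂ)) 2
    rw [key]
    exact hB.1 F
  refine ⟨main, houtA.mono ?_⟩
  rintro G ⟨F, hF⟩
  exact (main F G hF).1

end Smirnov
end
end

section
/- Let A be a bounded left multiplier of ℱ²_d which is left outer. Then for every positive integer n and every d-tuple X = (X₁,…,X_d) of n×n complex matrices with ‖Σ_{j=1}^d X_j X_j*‖ < 1, the matrix A(X) = Σ_{k≥0} Σ_{|α|=k} a_α X^α (which converges absolutely in operator norm) is invertible in the n×n matrices. -/
noncomputable section
open scoped ENNReal

namespace Smirnov

def wordOp {d n : ℕ}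
    (X : Fin d → (EuclideanSpace ℂ (Fin n) →L[ℂ] EuclideanSpace ℂ (Fin n)))
    (α : Word d) : EuclideanSpace ℂ (Fin n) →L[ℂ] EuclideanSpace ℂ (Fin n) :=
  (α.map X).prod

section Aux

variable {d n : ℕ}
  (X : Fin d → (EuclideanSpace ℂ (Fin n) →L[ℂ] EuclideanSpace ℂ (Fin n)))

local notation "E" => EuclideanSpace ℂ (Fin n)

/-- The `k`-th block of the evaluation of a power series at `X`. -/
def block (G : Word d → ℂ) (k : ℕ) : E →L[ℂ] E :=
  ∑ f : Fin k → Fin d, G (List.ofFn f) • wordOp X (List.ofFn f)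

lemma wordOp_nil : wordOp X ([] : Word d) = 1 := rfl

lemma wordOp_cons (a : Fin d) (l : Word d) :
    wordOp X (a :: l) = X a * wordOp X l := by
  simp [wordOp]

lemma wordOp_append (l₁ l₂ : Word d) :
    wordOp X (l₁ ++ l₂) = wordOp X l₁ * wordOp X l₂ := by
  simp [wordOp]

open ContinuousLinearMap in
lemma sum_adj_apply_sq_le (k : ℕ) (x : E) :
    ∑ f : Fin k → Fin d, ‖adjoint (wordOp X (List.ofFn f)) x‖ ^ 2 ≤
      ‖∑ j, X j * adjoint (X j)‖ ^ k * ‖x‖ ^ 2 := by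
  set r : ℝ := ‖∑ j, X j * adjoint (X j)‖ with hr
  have hr0 : 0 ≤ r := norm_nonneg _
  have key : ∀ y : E, ∑ j, ‖adjoint (X j) y‖ ^ 2 ≤ r * ‖y‖ ^ 2 := by
    intro y
    have h1 : ∀ j, ‖adjoint (X j) y‖ ^ 2
        = RCLike.re (inner (𝕜 := ℂ) y ((X j * adjoint (X j)) y)) := by
      intro j
      rw [norm_sq_eq_re_inner (𝕜 := ℂ), adjoint_inner_left]
      rfl
    calc ∑ j, ‖adjoint (X j) y‖ ^ 2
        = RCLike.re (inner (𝕜 := ℂ) y ((∑ j, X j * adjoint (X j)) y)) := by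
          simp only [h1, ContinuousLinearMap.sum_apply, inner_sum, map_sum]
      _ ≤ ‖(inner (𝕜 := ℂ) y ((∑ j, X j * adjoint (X j)) y) : ℂ)‖ := RCLike.re_le_norm _
      _ ≤ ‖y‖ * ‖(∑ j, X j * adjoint (X j)) y‖ := norm_inner_le_norm _ _
      _ ≤ ‖y‖ * (r * ‖y‖) := by
          gcongr
          exact ContinuousLinearMap.le_opNorm _ _
      _ = r * ‖y‖ ^ 2 := by ring
  induction k generalizing x with
  | zero =>
      simp [List.ofFn_zero, wordOp_nil, adjoint_id, ContinuousLinearMap.one_def]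
  | succ k ih =>
      have step : ∀ f : Fin d × (Fin k → Fin d),
          ‖adjoint (wordOp X (List.ofFn (Fin.cons f.1 f.2 : Fin (k+1) → Fin d))) x‖ ^ 2
            = ‖adjoint (wordOp X (List.ofFn f.2)) (adjoint (X f.1) x)‖ ^ 2 := by
        rintro ⟨j, g⟩
        have : List.ofFn (Fin.cons j g : Fin (k+1) → Fin d) = j :: List.ofFn g := by
          simp [List.ofFn_succ]
        rw [this, wordOp_cons]
        have : adjoint (X j * wordOp X (List.ofFn g))
            = adjoint (wordOp X (List.ofFn g)) ∘L adjoint (X j) := adjoint_comp _ _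
        rw [this]
        rfl
      calc ∑ f : Fin (k+1) → Fin d, ‖adjoint (wordOp X (List.ofFn f)) x‖ ^ 2
          = ∑ f : Fin d × (Fin k → Fin d),
              ‖adjoint (wordOp X (List.ofFn f.2)) (adjoint (X f.1) x)‖ ^ 2 := by
            refine (Fintype.sum_equiv (Fin.consEquiv fun _ => Fin d) _ _ ?_).symm
            intro f
            exact (step f).symm
        _ = ∑ j : Fin d, ∑ g : Fin k → Fin d,
              ‖adjoint (wordOp X (List.ofFn g)) (adjoint (X j) x)‖ ^ 2 := by
            rw [Fintype.sum_prod_type]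
        _ ≤ ∑ j : Fin d, r ^ k * ‖adjoint (X j) x‖ ^ 2 := by
            exact Finset.sum_le_sum fun j _ => ih (adjoint (X j) x)
        _ = r ^ k * ∑ j, ‖adjoint (X j) x‖ ^ 2 := by
            rw [Finset.mul_sum]
        _ ≤ r ^ k * (r * ‖x‖ ^ 2) := by
            have := key x
            gcongr
        _ = r ^ (k+1) * ‖x‖ ^ 2 := by ring

set_option maxHeartbeats 1000000 in
open ContinuousLinearMap in
lemma block_norm_le (G : Word d → ℂ) (k : ℕ) {c : ℝ} (hc : 0 ≤ c)
    (hG : ∑ f : Fin k → Fin d, ‖G (List.ofFn f)‖ ^ 2 ≤ c ^ 2) :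
    ‖block X G k‖ ≤ c * Real.sqrt ‖∑ j, X j * adjoint (X j)‖ ^ k := by
  set r : ℝ := ‖∑ j, X j * adjoint (X j)‖ with hrdef
  have hr0 : 0 ≤ r := norm_nonneg _
  have hnorm : ‖block X G k‖ = ‖adjoint (block X G k)‖ :=
    (LinearIsometryEquiv.norm_map ContinuousLinearMap.adjoint (block X G k)).symm
  rw [hnorm]
  refine ContinuousLinearMap.opNorm_le_bound _ (by positivity) fun x => ?_
  have hadj : adjoint (block X G k)
      = ∑ f : Fin k → Fin d,
          (starRingEnd ℂ) (G (List.ofFn f)) • adjoint (wordOp X (List.ofFn f)) := by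
    simp only [block, ← star_eq_adjoint, star_sum, star_smul, starRingEnd_apply]
  rw [hadj]
  calc ‖(∑ f : Fin k → Fin d,
        (starRingEnd ℂ) (G (List.ofFn f)) • adjoint (wordOp X (List.ofFn f))) x‖
      ≤ ∑ f : Fin k → Fin d, ‖G (List.ofFn f)‖ * ‖adjoint (wordOp X (List.ofFn f)) x‖ := by
        rw [ContinuousLinearMap.sum_apply]
        refine (norm_sum_le _ _).trans ?_
        refine Finset.sum_le_sum fun f _ => ?_
        rw [ContinuousLinearMap.smul_apply, norm_smul, RCLike.norm_conj]
    _ ≤ c * (Real.sqrt r ^ k * ‖x‖) := by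
        have hcs := Finset.sum_mul_sq_le_sq_mul_sq Finset.univ
          (fun f : Fin k → Fin d => ‖G (List.ofFn f)‖)
          (fun f : Fin k → Fin d => ‖adjoint (wordOp X (List.ofFn f)) x‖)
        have hb := sum_adj_apply_sq_le X k x
        have h2 : (∑ f : Fin k → Fin d,
            ‖G (List.ofFn f)‖ * ‖adjoint (wordOp X (List.ofFn f)) x‖) ^ 2
            ≤ c ^ 2 * (r ^ k * ‖x‖ ^ 2) :=
          hcs.trans (by gcongr)
        have h3 : c ^ 2 * (r ^ k * ‖x‖ ^ 2) = (c * (Real.sqrt r ^ k * ‖x‖)) ^ 2 := by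
          have h4 : Real.sqrt r ^ (2 * k) = r ^ k := by
            rw [pow_mul, Real.sq_sqrt hr0]
          rw [← h4]
          ring
        rw [h3] at h2
        have hnn : 0 ≤ c * (Real.sqrt r ^ k * ‖x‖) := by positivity
        nlinarith [Finset.sum_nonneg fun (f : Fin k → Fin d) (_ : f ∈ Finset.univ) =>
          mul_nonneg (norm_nonneg (G (List.ofFn f)))
            (norm_nonneg (adjoint (wordOp X (List.ofFn f)) x))]
    _ = c * Real.sqrt r ^ k * ‖x‖ := by ring

lemma block_cauchy_aux (A F : Word d → ℂ) (i j : ℕ) :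
    ∑ h : Fin (i + j) → Fin d,
      (A (List.take i (List.ofFn h)) * F (List.drop i (List.ofFn h))) • wordOp X (List.ofFn h)
      = block X A i * block X F j := by
  rw [block, block, Finset.sum_mul_sum, ← Fintype.sum_prod_type']
  refine (Fintype.sum_equiv (Fin.appendEquiv i j) _ _ ?_).symm
  rintro ⟨f, g⟩
  have happ : List.ofFn (Fin.appendEquiv i j (f, g)) = List.ofFn f ++ List.ofFn g :=
    List.ofFn_fin_append f g
  have hlen : (List.ofFn f).length = i := List.length_ofFn (f := f)
  rw [happ, List.take_left' hlen, List.drop_left' hlen, wordOp_append]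
  rw [smul_mul_assoc, mul_smul_comm, smul_smul]

lemma block_cauchy (A F : Word d → ℂ) (k : ℕ) :
    block X (cauchy A F) k
      = ∑ ij ∈ Finset.HasAntidiagonal.antidiagonal k, block X A ij.1 * block X F ij.2 := by
  rw [Finset.Nat.sum_antidiagonal_eq_sum_range_succ_mk]
  have hL : block X (cauchy A F) k
      = ∑ i ∈ Finset.range (k + 1), ∑ h : Fin k → Fin d,
          (A (List.take i (List.ofFn h)) * F (List.drop i (List.ofFn h)))
            • wordOp X (List.ofFn h) := by
    rw [block, Finset.sum_comm]
    refine Finset.sum_congr rfl fun h _ => ?_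
    simp only [cauchy, List.length_ofFn]
    exact Finset.sum_smul (R := ℂ) (M := EuclideanSpace ℂ (Fin n) →L[ℂ] EuclideanSpace ℂ (Fin n))
  rw [hL]
  refine Finset.sum_congr rfl fun i hi => ?_
  have hik : i ≤ k := Nat.lt_succ_iff.mp (Finset.mem_range.mp hi)
  obtain ⟨j, rfl⟩ : ∃ j, k = i + j := ⟨k - i, by omega⟩
  rw [show i + j - i = j by omega]
  exact block_cauchy_aux X A F i j

lemma sq_sum_le (G : Fock d) (k : ℕ) :
    ∑ f : Fin k → Fin d, ‖(G : Word d → ℂ) (List.ofFn f)‖ ^ 2 ≤ ‖G‖ ^ 2 := by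
  have h1 : ∑ f : Fin k → Fin d, ‖(G : Word d → ℂ) (List.ofFn f)‖ ^ 2
      = ∑ w ∈ Finset.image (fun f : Fin k → Fin d => List.ofFn f) Finset.univ,
          ‖(G : Word d → ℂ) w‖ ^ 2 := by
    rw [Finset.sum_image (fun f _ g _ h => List.ofFn_injective h)]
  have h2 := lp.sum_rpow_le_norm_rpow (by norm_num) G
    (Finset.image (fun f : Fin k → Fin d => List.ofFn f) Finset.univ)
  rw [h1]
  have h3 : ((2 : ℝ≥0∞)).toReal = (2 : ℝ) := by simp
  rw [h3] at h2
  simpa [Real.rpow_natCast] using h2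

lemma block_norm_le' (G : Fock d) (k : ℕ) :
    ‖block X (G : Word d → ℂ) k‖
      ≤ ‖G‖ * Real.sqrt ‖∑ j, X j * ContinuousLinearMap.adjoint (X j)‖ ^ k :=
  block_norm_le X _ k (norm_nonneg G) (sq_sum_le G k)

lemma block_norm_summable (G : Fock d)
    (hX : ‖∑ j, X j * ContinuousLinearMap.adjoint (X j)‖ < 1) :
    Summable fun k => ‖block X (G : Word d → ℂ) k‖ := by
  have hρ1 : Real.sqrt ‖∑ j, X j * ContinuousLinearMap.adjoint (X j)‖ < 1 :=
    (Real.sqrt_lt' one_pos).2 (by rw [one_pow]; exact hX)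
  exact Summable.of_nonneg_of_le (fun k => norm_nonneg _)
    (fun k => block_norm_le' X G k)
    ((summable_geometric_of_lt_one (Real.sqrt_nonneg _) hρ1).mul_left ‖G‖)

lemma block_tsum_norm_le (G : Fock d)
    (hX : ‖∑ j, X j * ContinuousLinearMap.adjoint (X j)‖ < 1) :
    ∑' k, ‖block X (G : Word d → ℂ) k‖
      ≤ ‖G‖ * (1 - Real.sqrt ‖∑ j, X j * ContinuousLinearMap.adjoint (X j)‖)⁻¹ := by
  have hρ1 : Real.sqrt ‖∑ j, X j * ContinuousLinearMap.adjoint (X j)‖ < 1 :=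
    (Real.sqrt_lt' one_pos).2 (by rw [one_pow]; exact hX)
  calc ∑' k, ‖block X (G : Word d → ℂ) k‖
      ≤ ∑' k, ‖G‖ * Real.sqrt ‖∑ j, X j * ContinuousLinearMap.adjoint (X j)‖ ^ k :=
        Summable.tsum_le_tsum (fun k => block_norm_le' X G k) (block_norm_summable X G hX)
          ((summable_geometric_of_lt_one (Real.sqrt_nonneg _) hρ1).mul_left ‖G‖)
    _ = ‖G‖ * (1 - Real.sqrt ‖∑ j, X j * ContinuousLinearMap.adjoint (X j)‖)⁻¹ := by
        rw [tsum_mul_left, tsum_geometric_of_lt_one (Real.sqrt_nonneg _) hρ1]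

end Aux

set_option maxHeartbeats 1000000 in
/-- If `A` is a left outer bounded left multiplier of `ℱ²_d`,
then for every `n ≥ 1` and every `d`-tuple `X` of `n×n` matrices (operators on
`ℂⁿ`) with `‖∑_j X_j X_j*‖ < 1`, the series
`A(X) = ∑_{k≥0} ∑_{|α|=k} a_α X^α` converges absolutely in operator norm and
its sum is invertible.  (Words of length `k` are enumerated by functions
`Fin k → Fin d` via `List.ofFn`.) -/
theorem statement5 {d : ℕ} (hd : 0 < d) (A : Word d → ℂ)
    (hA : IsBLM A) (houtA : IsLeftOuter A)
    (n : ℕ) (hn : 0 < n)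
    (X : Fin d → (EuclideanSpace ℂ (Fin n) →L[ℂ] EuclideanSpace ℂ (Fin n)))
    (hX : ‖∑ j, X j * ContinuousLinearMap.adjoint (X j)‖ < 1) :
    ∃ S : EuclideanSpace ℂ (Fin n) →L[ℂ] EuclideanSpace ℂ (Fin n),
      (Summable fun k : ℕ =>
        ‖∑ f : Fin k → Fin d, A (List.ofFn f) • wordOp X (List.ofFn f)‖) ∧
      HasSum (fun k : ℕ =>
        ∑ f : Fin k → Fin d, A (List.ofFn f) • wordOp X (List.ofFn f)) S ∧
      IsUnit S := by
  classical
  set r : ℝ := ‖∑ j, X j * ContinuousLinearMap.adjoint (X j)‖ with hrdef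
  have hρ0 : (0:ℝ) ≤ Real.sqrt r := Real.sqrt_nonneg _
  have hρ1 : Real.sqrt r < 1 := (Real.sqrt_lt' one_pos).2 (by simpa using hX)
  have hερ : (0:ℝ) < 1 - Real.sqrt r := by linarith
  -- the vacuum vector ξ_∅ as an element of Fock space
  set ξ : Fock d := lp.single 2 ([] : Word d) (1 : ℂ) with hξdef
  have hξfun : (ξ : Word d → ℂ) = fun w => if w = ([] : Word d) then 1 else 0 := by
    funext w
    by_cases hw : w = ([] : Word d)
    · subst hw; simp [hξdef, lp.single_apply_self]
    · simp [hξdef, lp.single_apply_ne _ _ _ hw, hw]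
  -- A ⬝ ξ_∅ = A, hence A ∈ ℓ²
  have hAξ : cauchy A (ξ : Word d → ℂ) = A := by
    funext α
    rw [hξfun]
    simp only [cauchy]
    rw [Finset.sum_eq_single α.length]
    · rw [List.take_length, List.drop_length]; simp
    · intro i hi hne
      have hi' : i < α.length + 1 := Finset.mem_range.mp hi
      have hne' : ¬(List.drop i α = []) := by
        rw [List.drop_eq_nil_iff]
        omega
      simp [hne']
    · intro h; exact absurd (Finset.self_mem_range_succ _) h
  have hA2 : Memℓp A 2 := by
    have h := hA.1 ξ
    rwa [hAξ] at h
  set ALp : Fock d := ⟨A, hA2⟩ with hALpdef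
  have hALp : (ALp : Word d → ℂ) = A := rfl
  -- summability of the blocks of A
  have sumA : Summable fun k => ‖block X A k‖ := by
    have h := block_norm_summable X ALp hX
    rwa [hALp] at h
  have smblA : Summable fun k => block X A k := Summable.of_norm sumA
  set SA : EuclideanSpace ℂ (Fin n) →L[ℂ] EuclideanSpace ℂ (Fin n) := ∑' k, block X A k
    with hSAdef
  have hasSA : HasSum (fun k => block X A k) SA := smblA.hasSum
  -- multiplicativity of evaluation
  have mult : ∀ F : Fock d,
      (∑' k, block X (cauchy A (F : Word d → ℂ)) k)
        = SA * ∑' k, block X (F : Word d → ℂ) k := by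
    intro F
    have h1 := tsum_mul_tsum_eq_tsum_sum_antidiagonal_of_summable_norm
      (f := fun k => block X A k) (g := fun k => block X (F : Word d → ℂ) k)
      sumA (block_norm_summable X F hX)
    calc ∑' k, block X (cauchy A (F : Word d → ℂ)) k
        = ∑' k, ∑ ij ∈ Finset.HasAntidiagonal.antidiagonal k,
            block X A ij.1 * block X (F : Word d → ℂ) ij.2 :=
          tsum_congr fun k => block_cauchy X A _ k
      _ = SA * ∑' k, block X (F : Word d → ℂ) k := h1.symm
  -- density: approximate ξ by A ⬝ F
  obtain ⟨G, hGmem, hGdist⟩ := houtA.exists_dist_lt ξ (by positivity : (0:ℝ) < (1 - Real.sqrt r)/2)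
  obtain ⟨F, hGF⟩ := hGmem
  set SG : EuclideanSpace ℂ (Fin n) →L[ℂ] EuclideanSpace ℂ (Fin n) :=
    ∑' k, block X (G : Word d → ℂ) k with hSGdef
  have hasSG : HasSum (fun k => block X (G : Word d → ℂ) k) SG :=
    (Summable.of_norm (block_norm_summable X G hX)).hasSum
  -- HasSum of the blocks of ξ is 1
  have hasSξ : HasSum (fun k => block X (ξ : Word d → ℂ) k) 1 := by
    have hfun : (fun k => block X (ξ : Word d → ℂ) k)
        = fun k => if k = 0 then (1 : EuclideanSpace ℂ (Fin n) →L[ℂ] EuclideanSpace ℂ (Fin n))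
            else 0 := by
      funext k
      cases k with
      | zero =>
          simp only [block, hξfun]
          rw [Fintype.sum_eq_single (Fin.elim0 : Fin 0 → Fin d)
            (fun f hf => absurd (Subsingleton.elim f Fin.elim0) hf)]
          simp [wordOp_nil]
      | succ m =>
          simp only [block, hξfun]
          rw [Finset.sum_eq_zero]
          · rfl
          · intro f _
            have : List.ofFn f ≠ ([] : Word d) := by
              simp [List.ofFn_eq_nil_iff]
            rw [if_neg this]
            exact zero_smul ℂ (A := EuclideanSpace ℂ (Fin n) →L[ℂ] EuclideanSpace ℂ (Fin n))
              (wordOp X (List.ofFn f))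
    rw [hfun]
    exact hasSum_ite_eq 0 1
  -- difference of blocks
  have hdiff : (fun k => block X (G : Word d → ℂ) k - block X (ξ : Word d → ℂ) k)
      = fun k => block X ((G - ξ : Fock d) : Word d → ℂ) k := by
    funext k
    have hw : ∀ w, ((G - ξ : Fock d) : Word d → ℂ) w
        = (G : Word d → ℂ) w - (ξ : Word d → ℂ) w := fun w => by
      rw [lp.coeFn_sub]; rfl
    rw [show block X ((G - ξ : Fock d) : Word d → ℂ) k
        = ∑ f : Fin k → Fin d,
            ((G : Word d → ℂ) (List.ofFn f) - (ξ : Word d → ℂ) (List.ofFn f))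
              • wordOp X (List.ofFn f) from
      Finset.sum_congr rfl fun f _ => by rw [hw]]
    rw [block, block, ← Finset.sum_sub_distrib]
    exact Finset.sum_congr rfl fun f _ =>
      (sub_smul ((G : Word d → ℂ) (List.ofFn f)) ((ξ : Word d → ℂ) (List.ofFn f))
        (wordOp X (List.ofFn f))).symm
  have hasdiff : HasSum (fun k => block X ((G - ξ : Fock d) : Word d → ℂ) k) (SG - 1) := by
    rw [← hdiff]
    exact hasSG.sub hasSξ
  -- norm estimate
  have hnorm1 : ‖SG - 1‖ < 1 := by
    have h0 : ‖SG - 1‖ ≤ ∑' k, ‖block X ((G - ξ : Fock d) : Word d → ℂ) k‖ := by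
      rw [← hasdiff.tsum_eq]
      exact norm_tsum_le_tsum_norm (block_norm_summable X (G - ξ) hX)
    have h1 : ∑' k, ‖block X ((G - ξ : Fock d) : Word d → ℂ) k‖
        ≤ ‖G - ξ‖ * (1 - Real.sqrt r)⁻¹ := block_tsum_norm_le X (G - ξ) hX
    have h2 : ‖G - ξ‖ < (1 - Real.sqrt r)/2 := by
      rw [← dist_eq_norm, dist_comm]
      exact hGdist
    have h3 : ‖G - ξ‖ * (1 - Real.sqrt r)⁻¹ < ((1 - Real.sqrt r)/2) * (1 - Real.sqrt r)⁻¹ :=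
      mul_lt_mul_of_pos_right h2 (by positivity)
    have h4 : ((1 - Real.sqrt r)/2) * (1 - Real.sqrt r)⁻¹ = 1/2 := by
      field_simp
    linarith
  -- SG is a unit
  have huSG : IsUnit SG := by
    have hlt : ‖1 - SG‖ < 1 := by rwa [norm_sub_rev] at hnorm1
    have h := (Units.oneSub (1 - SG) hlt).isUnit
    rwa [Units.val_oneSub, sub_sub_cancel] at h
  -- factorization SG = SA * SF
  set SF : EuclideanSpace ℂ (Fin n) →L[ℂ] EuclideanSpace ℂ (Fin n) :=
    ∑' k, block X (F : Word d → ℂ) k with hSFdef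
  have hfac : SG = SA * SF := by
    rw [hSGdef, hGF]
    exact mult F
  rw [hfac] at huSG
  obtain ⟨u, hu⟩ := huSG
  set T : EuclideanSpace ℂ (Fin n) →L[ℂ] EuclideanSpace ℂ (Fin n) := SF * ↑u⁻¹ with hTdef
  have h1 : SA * T = 1 := by
    rw [hTdef, ← mul_assoc, ← hu, Units.mul_inv]
  have hsurj : Function.Surjective SA := by
    intro y
    refine ⟨T y, ?_⟩
    have := ContinuousLinearMap.ext_iff.mp h1 y
    simpa [ContinuousLinearMap.mul_apply, ContinuousLinearMap.one_apply] using this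
  have hinj : Function.Injective SA := by
    have hs : Function.Surjective (SA : EuclideanSpace ℂ (Fin n) →ₗ[ℂ] EuclideanSpace ℂ (Fin n)) :=
      hsurj
    exact LinearMap.injective_iff_surjective.mpr hs
  have h2 : T * SA = 1 := by
    refine ContinuousLinearMap.ext fun x => ?_
    apply hinj
    have := ContinuousLinearMap.ext_iff.mp h1 (SA x)
    simpa [ContinuousLinearMap.mul_apply, ContinuousLinearMap.one_apply] using this
  exact ⟨SA, sumA, hasSA, ⟨⟨SA, T, h1, h2⟩, rfl⟩⟩

end Smirnov
end
end

section
/- Let H be a formal free power series. If F ∈ D_H and the coefficient of F at the empty word vanishes (⟨F, ξ_∅⟩ = 0), then for each j = 1,…,d the vector R_j*F belongs to D_H and H·(R_j*F) = R_j*(H·F); i.e., the operator T_H is local. -/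
noncomputable section
open scoped ENNReal

namespace Smirnov

/-- The right creation operator `R_j` at the level of formal power series:
`R_j ξ_α = ξ_{αj}`. -/
def rshift {d : ℕ} (j : Fin d) (F : Word d → ℂ) : Word d → ℂ :=
  fun β => if β.getLast? = some j then F β.dropLast else 0

/-- The backward shift `R_j*` at the level of formal power series. -/
def rshiftAdj {d : ℕ} (j : Fin d) (F : Word d → ℂ) : Word d → ℂ :=
  fun γ => F (γ ++ [j])

lemma memℓp_rshiftAdj {d : ℕ} (j : Fin d) {f : Word d → ℂ} (hf : Memℓp f 2) :
    Memℓp (rshiftAdj j f) 2 := by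
  apply memℓp_gen
  have hs : Summable fun w : Word d => ‖f w‖ ^ (2 : ℝ≥0∞).toReal :=
    (memℓp_gen_iff (by norm_num)).1 hf
  have hinj : Function.Injective (fun γ : Word d => γ ++ [j]) := fun a b h =>
    List.append_cancel_right h
  exact hs.comp_injective hinj

lemma cauchy_rshiftAdj {d : ℕ} (j : Fin d) (H f : Word d → ℂ) (h0 : f [] = 0) :
    cauchy H (rshiftAdj j f) = rshiftAdj j (cauchy H f) := by
  funext γ
  simp only [cauchy, rshiftAdj, List.length_append, List.length_singleton]
  conv_rhs => rw [Finset.sum_range_succ]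
  rw [show List.drop (γ.length + 1) (γ ++ [j]) = [] by simp, h0, mul_zero, add_zero]
  apply Finset.sum_congr rfl
  intro i hi
  rw [Finset.mem_range] at hi
  rw [List.take_append_of_le_length (by omega), List.drop_append_of_le_length (by omega)]

/-- If `F ∈ D_H` and the coefficient of `F` at the empty word
vanishes, then `R_j* F ∈ D_H` and `H·(R_j* F) = R_j*(H·F)`: the operator `T_H`
is local. -/
theorem statement7 {d : ℕ} (hd : 0 < d) (H : Word d → ℂ)
    (F : Fock d) (hF : F ∈ domH H)
    (h0 : (F : Word d → ℂ) ([] : Word d) = 0) (j : Fin d) :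
    Memℓp (rshiftAdj j (F : Word d → ℂ)) 2 ∧
    Memℓp (cauchy H (rshiftAdj j (F : Word d → ℂ))) 2 ∧
    cauchy H (rshiftAdj j (F : Word d → ℂ)) = rshiftAdj j (cauchy H (F : Word d → ℂ)) := by
  have h1 : Memℓp (rshiftAdj j (F : Word d → ℂ)) 2 := memℓp_rshiftAdj j (lp.memℓp F)
  have h3 := cauchy_rshiftAdj j H (F : Word d → ℂ) h0
  exact ⟨h1, h3 ▸ memℓp_rshiftAdj j hF, h3⟩

end Smirnov
end
end
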